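/- For the trivariate exchangeable Marshall–Olkin model with all rates λ_I = λ, the conditional survival function of (X₁,X₂) given X₃ = x₃ is F̄(x₁,x₂|x₃) = (1/4) e^{-λ(x₁+x₂+max(x₁,x₂))} · [4·𝟙{x₁,x₂ ≤ x₃} + e^{-λ(x₁+x₂+max(x₁,x₂)-3x₃)}·𝟙{x₁,x₂ > x₃} + 2e^{-2λ(x₂-x₃)}·𝟙{x₁≤x₃ < x₂} + 2e^{-2λ(x₁-x₃)}·𝟙{x₂≤x₃ < x₁}]. -/

import Mathlib

open Real MeasureTheory ProbabilityTheory
open Set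

lemma mo_tail_int {c : ℝ} (hc : 0 < c) (a : ℝ) :
    ∫ s in Ioi a, c * Real.exp (-(c * s)) = Real.exp (-(c * a)) := by
  rw [MeasureTheory.integral_const_mul]
  have h := MeasureTheory.integral_comp_mul_left_Ioi (fun x => Real.exp (-x)) a hc
  simp only [neg_mul_eq_neg_mul] at h ⊢
  rw [h, integral_exp_neg_Ioi, smul_eq_mul]
  field_simp

lemma mo_ioc_int {c : ℝ} (hc : 0 < c) {a b : ℝ} (hab : a ≤ b) :
    ∫ s in Ioc a b, c * Real.exp (-(c * s)) = Real.exp (-(c * a)) - Real.exp (-(c * b)) := by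
  rw [← intervalIntegral.integral_of_le hab]
  have hderiv : ∀ x ∈ Set.uIcc a b, HasDerivAt (fun y => -Real.exp (-(c * y)))
      (c * Real.exp (-(c * x))) x := fun x _ => hasDerivAt_neg_exp_mul_exp
  rw [intervalIntegral.integral_eq_sub_of_hasDerivAt hderiv ?_]
  · ring
  · apply Continuous.intervalIntegrable
    continuity
lemma mo_exp_integrableOn (c : ℝ) {d : ℝ} (hd : 0 < d) (a : ℝ) :
    IntegrableOn (fun s => c * Real.exp (-(d * s))) (Ioi a) := by
  apply Integrable.const_mul
  have h := exp_neg_integrableOn_Ioi a hd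
  simp only [neg_mul] at h
  exact h

noncomputable def moG (l x₁ x₂ s : ℝ) : ℝ :=
  (1 / 4) * Real.exp (-(l * (x₁ + x₂ + max x₁ x₂))) *
    ((if x₁ ≤ s ∧ x₂ ≤ s then (4 : ℝ) else 0) +
      (if s < x₁ ∧ s < x₂ then
        Real.exp (-(l * (x₁ + x₂ + max x₁ x₂ - 3 * s))) else 0) +
      (if x₁ ≤ s ∧ s < x₂ then 2 * Real.exp (-(2 * l * (x₂ - s))) else 0) +
      (if x₂ ≤ s ∧ s < x₁ then 2 * Real.exp (-(2 * l * (x₁ - s))) else 0))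

noncomputable def moF (l x₁ x₂ s : ℝ) : ℝ :=
  moG l x₁ x₂ s * (4 * l * Real.exp (-(4 * l * s)))

noncomputable def moT (l x₁ x₂ t : ℝ) : ℝ :=
  Real.exp (-(l * (x₁ + x₂ + t + max x₁ x₂ + max x₁ t + max x₂ t + max (max x₁ x₂) t)))

lemma moG_measurable (l x₁ x₂ : ℝ) : Measurable (moG l x₁ x₂) := by
  unfold moG
  apply Measurable.const_mul
  have hle : ∀ c : ℝ, MeasurableSet {s : ℝ | c ≤ s} := fun c => measurableSet_Ici
  have hlt : ∀ c : ℝ, MeasurableSet {s : ℝ | s < c} := fun c => measurableSet_Iio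
  refine Measurable.add (Measurable.add (Measurable.add ?_ ?_) ?_) ?_ <;>
  · apply Measurable.ite _ (by fun_prop) (by fun_prop)
    exact MeasurableSet.inter (by apply_rules [hle, hlt]) (by apply_rules [hle, hlt])

lemma moG_nonneg (l x₁ x₂ s : ℝ) (hl : 0 < l) : 0 ≤ moG l x₁ x₂ s := by
  unfold moG
  have h1 : (0:ℝ) ≤ if x₁ ≤ s ∧ x₂ ≤ s then (4:ℝ) else 0 := by split_ifs <;> norm_num
  have h2 : (0:ℝ) ≤ if s < x₁ ∧ s < x₂ then
      Real.exp (-(l * (x₁ + x₂ + max x₁ x₂ - 3 * s))) else 0 := by positivity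
  have h3 : (0:ℝ) ≤ if x₁ ≤ s ∧ s < x₂ then 2 * Real.exp (-(2 * l * (x₂ - s))) else 0 := by
    positivity
  have h4 : (0:ℝ) ≤ if x₂ ≤ s ∧ s < x₁ then 2 * Real.exp (-(2 * l * (x₁ - s))) else 0 := by
    positivity
  positivity

lemma moG_le (l x₁ x₂ s : ℝ) (hl : 0 < l) (hx₁ : 0 ≤ x₁) (hx₂ : 0 ≤ x₂) :
    moG l x₁ x₂ s ≤ 9 / 4 := by
  unfold moG
  have hM : x₁ ≤ max x₁ x₂ := le_max_left _ _
  have hK : Real.exp (-(l * (x₁ + x₂ + max x₁ x₂))) ≤ 1 := by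
    rw [Real.exp_le_one_iff]
    nlinarith [le_max_left x₁ x₂]
  have h1 : (if x₁ ≤ s ∧ x₂ ≤ s then (4:ℝ) else 0) ≤ 4 := by split_ifs <;> norm_num
  have h2 : (if s < x₁ ∧ s < x₂ then
      Real.exp (-(l * (x₁ + x₂ + max x₁ x₂ - 3 * s))) else 0) ≤ 1 := by
    split_ifs with h
    · rw [Real.exp_le_one_iff]
      nlinarith [le_max_left x₁ x₂, h.1, h.2]
    · norm_num
  have h3 : (if x₁ ≤ s ∧ s < x₂ then 2 * Real.exp (-(2 * l * (x₂ - s))) else 0) ≤ 2 := by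
    split_ifs with h
    · nlinarith [Real.exp_le_one_iff.mpr (by nlinarith [h.2] : -(2 * l * (x₂ - s)) ≤ 0)]
    · norm_num
  have h4 : (if x₂ ≤ s ∧ s < x₁ then 2 * Real.exp (-(2 * l * (x₁ - s))) else 0) ≤ 2 := by
    split_ifs with h
    · nlinarith [Real.exp_le_one_iff.mpr (by nlinarith [h.2] : -(2 * l * (x₁ - s)) ≤ 0)]
    · norm_num
  have h1' : (0:ℝ) ≤ if x₁ ≤ s ∧ x₂ ≤ s then (4:ℝ) else 0 := by split_ifs <;> norm_num
  have h2' : (0:ℝ) ≤ if s < x₁ ∧ s < x₂ then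
      Real.exp (-(l * (x₁ + x₂ + max x₁ x₂ - 3 * s))) else 0 := by positivity
  have h3' : (0:ℝ) ≤ if x₁ ≤ s ∧ s < x₂ then 2 * Real.exp (-(2 * l * (x₂ - s))) else 0 := by
    positivity
  have h4' : (0:ℝ) ≤ if x₂ ≤ s ∧ s < x₁ then 2 * Real.exp (-(2 * l * (x₁ - s))) else 0 := by
    positivity
  nlinarith [Real.exp_pos (-(l * (x₁ + x₂ + max x₁ x₂)))]

lemma moF_integrableOn (l x₁ x₂ : ℝ) (hl : 0 < l) (hx₁ : 0 ≤ x₁) (hx₂ : 0 ≤ x₂) (a : ℝ) :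
    IntegrableOn (moF l x₁ x₂) (Ioi a) := by
  apply Integrable.mono' (mo_exp_integrableOn (9 * l) (by positivity : (0:ℝ) < 4 * l) a)
  · exact ((moG_measurable l x₁ x₂).mul (by fun_prop)).aestronglyMeasurable
  · refine Filter.Eventually.of_forall fun s => ?_
    have h0 := moG_nonneg l x₁ x₂ s hl
    have h9 := moG_le l x₁ x₂ s hl hx₁ hx₂
    rw [moF, Real.norm_eq_abs, abs_of_nonneg (by positivity)]
    calc moG l x₁ x₂ s * (4 * l * Real.exp (-(4 * l * s)))
        ≤ (9 / 4) * (4 * l * Real.exp (-(4 * l * s))) :=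
          mul_le_mul_of_nonneg_right h9 (by positivity)
      _ = 9 * l * Real.exp (-(4 * l * s)) := by ring
lemma mo_int_top {l x₁ x₂ : ℝ} (hl : 0 < l) {t : ℝ} (hM : max x₁ x₂ ≤ t) :
    ∫ s in Ioi t, moF l x₁ x₂ s = moT l x₁ x₂ t := by
  have h1t : x₁ ≤ t := le_trans (le_max_left _ _) hM
  have h2t : x₂ ≤ t := le_trans (le_max_right _ _) hM
  have hcong : EqOn (moF l x₁ x₂)
      (fun s => Real.exp (-(l * (x₁ + x₂ + max x₁ x₂))) * (4 * l * Real.exp (-(4 * l * s))))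
      (Ioi t) := by
    intro s hs
    rw [mem_Ioi] at hs
    simp only [moF, moG]
    rw [if_pos ⟨h1t.trans hs.le, h2t.trans hs.le⟩,
      if_neg (fun h => absurd h.1 (not_lt.2 (h1t.trans hs.le))),
      if_neg (fun h => absurd h.2 (not_lt.2 (h2t.trans hs.le))),
      if_neg (fun h => absurd h.2 (not_lt.2 (h1t.trans hs.le)))]
    ring
  rw [setIntegral_congr_fun measurableSet_Ioi hcong, MeasureTheory.integral_const_mul,
    mo_tail_int (by positivity : (0:ℝ) < 4 * l) t]
  unfold moT
  rw [max_eq_right h1t, max_eq_right h2t, max_eq_right hM, ← Real.exp_add]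
  congr 1; ring

lemma mo_int_mid₁ {l x₁ x₂ : ℝ} (hl : 0 < l) (hx₁ : 0 ≤ x₁) (hx₂ : 0 ≤ x₂)
    {t : ℝ} (h1t : x₁ ≤ t) (ht2 : t < x₂) :
    ∫ s in Ioi t, moF l x₁ x₂ s = moT l x₁ x₂ t := by
  have hx12 : x₁ ≤ x₂ := h1t.trans ht2.le
  have hM : max x₁ x₂ = x₂ := max_eq_right hx12
  rw [← Ioc_union_Ioi_eq_Ioi ht2.le,
    setIntegral_union (Ioc_disjoint_Ioi le_rfl) measurableSet_Ioi
      ((moF_integrableOn l x₁ x₂ hl hx₁ hx₂ t).mono_set Ioc_subset_Ioi_self)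
      (moF_integrableOn l x₁ x₂ hl hx₁ hx₂ x₂),
    mo_int_top hl hM.le]
  have hioc : ∫ s in Ioc t x₂, moF l x₁ x₂ s
      = ∫ s in Ioc t x₂, (Real.exp (-(l * (x₁ + x₂ + x₂))) * Real.exp (-(2 * l * x₂))) *
          (2 * l * Real.exp (-(2 * l * s))) := by
    rw [integral_Ioc_eq_integral_Ioo, integral_Ioc_eq_integral_Ioo]
    apply setIntegral_congr_fun measurableSet_Ioo
    intro s hs
    obtain ⟨hs1, hs2⟩ := hs
    simp only [moF, moG, hM]
    rw [if_neg (fun h => absurd hs2 (not_lt.2 h.2)),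
      if_neg (fun h => absurd h.1 (not_lt.2 (h1t.trans hs1.le))),
      if_pos ⟨h1t.trans hs1.le, hs2⟩,
      if_neg (fun h => absurd hs2 (not_lt.2 h.1))]
    have e1 : Real.exp (-(2 * l * (x₂ - s))) = Real.exp (-(2 * l * x₂)) * Real.exp (2 * l * s) := by
      rw [← Real.exp_add]; congr 1; ring
    have e3 : Real.exp (2 * l * s) * Real.exp (-(4 * l * s)) = Real.exp (-(2 * l * s)) := by
      rw [← Real.exp_add]; congr 1; ring
    rw [e1]
    linear_combination (2 * l * Real.exp (-(l * (x₁ + x₂ + x₂))) * Real.exp (-(2 * l * x₂))) * e3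
  rw [hioc, MeasureTheory.integral_const_mul, mo_ioc_int (by positivity : (0:ℝ) < 2 * l) ht2.le]
  unfold moT
  simp only [hM, max_self, max_eq_right h1t, max_eq_left ht2.le, max_eq_right hx12]
  simp only [mul_sub, ← Real.exp_add]
  ring_nf

lemma mo_int_mid₂ {l x₁ x₂ : ℝ} (hl : 0 < l) (hx₁ : 0 ≤ x₁) (hx₂ : 0 ≤ x₂)
    {t : ℝ} (h2t : x₂ ≤ t) (ht1 : t < x₁) :
    ∫ s in Ioi t, moF l x₁ x₂ s = moT l x₁ x₂ t := by
  have hx21 : x₂ ≤ x₁ := h2t.trans ht1.le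
  have hM : max x₁ x₂ = x₁ := max_eq_left hx21
  rw [← Ioc_union_Ioi_eq_Ioi ht1.le,
    setIntegral_union (Ioc_disjoint_Ioi le_rfl) measurableSet_Ioi
      ((moF_integrableOn l x₁ x₂ hl hx₁ hx₂ t).mono_set Ioc_subset_Ioi_self)
      (moF_integrableOn l x₁ x₂ hl hx₁ hx₂ x₁),
    mo_int_top hl hM.le]
  have hioc : ∫ s in Ioc t x₁, moF l x₁ x₂ s
      = ∫ s in Ioc t x₁, (Real.exp (-(l * (x₁ + x₂ + x₁))) * Real.exp (-(2 * l * x₁))) *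
          (2 * l * Real.exp (-(2 * l * s))) := by
    rw [integral_Ioc_eq_integral_Ioo, integral_Ioc_eq_integral_Ioo]
    apply setIntegral_congr_fun measurableSet_Ioo
    intro s hs
    obtain ⟨hs1, hs2⟩ := hs
    simp only [moF, moG, hM]
    rw [if_neg (fun h => absurd hs2 (not_lt.2 h.1)),
      if_neg (fun h => absurd h.2 (not_lt.2 (h2t.trans hs1.le))),
      if_neg (fun h => absurd hs2 (not_lt.2 h.1)),
      if_pos ⟨h2t.trans hs1.le, hs2⟩]
    have e1 : Real.exp (-(2 * l * (x₁ - s))) = Real.exp (-(2 * l * x₁)) * Real.exp (2 * l * s) := by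
      rw [← Real.exp_add]; congr 1; ring
    have e3 : Real.exp (2 * l * s) * Real.exp (-(4 * l * s)) = Real.exp (-(2 * l * s)) := by
      rw [← Real.exp_add]; congr 1; ring
    rw [e1]
    linear_combination (2 * l * Real.exp (-(l * (x₁ + x₂ + x₁))) * Real.exp (-(2 * l * x₁))) * e3
  rw [hioc, MeasureTheory.integral_const_mul, mo_ioc_int (by positivity : (0:ℝ) < 2 * l) ht1.le]
  unfold moT
  simp only [hM, max_self, max_eq_left ht1.le, max_eq_right h2t, max_eq_right hx21]
  simp only [mul_sub, ← Real.exp_add]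
  ring_nf

lemma mo_int_min {l x₁ x₂ : ℝ} (hl : 0 < l) (hx₁ : 0 ≤ x₁) (hx₂ : 0 ≤ x₂)
    {t : ℝ} (ht1 : t < x₁) (ht2 : t < x₂) :
    ∫ s in Ioi t, moF l x₁ x₂ s = moT l x₁ x₂ t := by
  set m := min x₁ x₂ with hm
  have htm : t < m := lt_min ht1 ht2
  have hm1 : m ≤ x₁ := min_le_left _ _
  have hm2 : m ≤ x₂ := min_le_right _ _
  have htail : ∫ s in Ioi m, moF l x₁ x₂ s = moT l x₁ x₂ m := by
    rcases lt_trichotomy x₁ x₂ with h | h | h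
    · rw [hm, min_eq_left h.le]
      exact mo_int_mid₁ hl hx₁ hx₂ le_rfl h
    · subst h
      rw [hm, min_self]
      exact mo_int_top hl (by simp)
    · rw [hm, min_eq_right h.le]
      exact mo_int_mid₂ hl hx₁ hx₂ le_rfl h
  rw [← Ioc_union_Ioi_eq_Ioi htm.le,
    setIntegral_union (Ioc_disjoint_Ioi le_rfl) measurableSet_Ioi
      ((moF_integrableOn l x₁ x₂ hl hx₁ hx₂ t).mono_set Ioc_subset_Ioi_self)
      (moF_integrableOn l x₁ x₂ hl hx₁ hx₂ m),
    htail]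
  have hioc : ∫ s in Ioc t m, moF l x₁ x₂ s
      = ∫ s in Ioc t m, (Real.exp (-(l * (x₁ + x₂ + max x₁ x₂))) *
          Real.exp (-(l * (x₁ + x₂ + max x₁ x₂)))) * (l * Real.exp (-(l * s))) := by
    rw [integral_Ioc_eq_integral_Ioo, integral_Ioc_eq_integral_Ioo]
    apply setIntegral_congr_fun measurableSet_Ioo
    intro s hs
    obtain ⟨hs1, hs2⟩ := hs
    have hsx1 : s < x₁ := lt_of_lt_of_le hs2 hm1
    have hsx2 : s < x₂ := lt_of_lt_of_le hs2 hm2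
    simp only [moF, moG]
    rw [if_neg (fun h => absurd hsx1 (not_lt.2 h.1)),
      if_pos ⟨hsx1, hsx2⟩,
      if_neg (fun h => absurd hsx1 (not_lt.2 h.1)),
      if_neg (fun h => absurd hsx2 (not_lt.2 h.1))]
    have e1 : Real.exp (-(l * (x₁ + x₂ + max x₁ x₂ - 3 * s)))
        = Real.exp (-(l * (x₁ + x₂ + max x₁ x₂))) * Real.exp (3 * l * s) := by
      rw [← Real.exp_add]; congr 1; ring
    have e3 : Real.exp (3 * l * s) * Real.exp (-(4 * l * s)) = Real.exp (-(l * s)) := by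
      rw [← Real.exp_add]; congr 1; ring
    rw [e1]
    linear_combination (l * Real.exp (-(l * (x₁ + x₂ + max x₁ x₂))) *
      Real.exp (-(l * (x₁ + x₂ + max x₁ x₂)))) * e3
  rw [hioc, MeasureTheory.integral_const_mul, mo_ioc_int hl htm.le]
  unfold moT
  simp only [max_eq_left ht1.le, max_eq_left ht2.le, max_eq_left hm1, max_eq_left hm2,
    max_eq_left (le_trans htm.le (le_trans hm1 (le_max_left x₁ x₂))),
    max_eq_left (le_trans hm1 (le_max_left x₁ x₂))]
  simp only [mul_sub, ← Real.exp_add]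
  ring_nf

lemma mo_int_main {l x₁ x₂ : ℝ} (hl : 0 < l) (hx₁ : 0 ≤ x₁) (hx₂ : 0 ≤ x₂) (t : ℝ) :
    ∫ s in Ioi t, moF l x₁ x₂ s = moT l x₁ x₂ t := by
  rcases le_or_gt (max x₁ x₂) t with h | h
  · exact mo_int_top hl h
  · rcases le_or_gt x₁ t with h1 | h1
    · have h2 : t < x₂ := by
        rcases le_or_gt x₂ t with h2 | h2
        · exact absurd (max_le h1 h2) (not_le.2 h)
        · exact h2
      exact mo_int_mid₁ hl hx₁ hx₂ h1 h2
    · rcases le_or_gt x₂ t with h2 | h2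
      · exact mo_int_mid₂ hl hx₁ hx₂ h2 h1
      · exact mo_int_min hl hx₁ hx₂ h1 h2
noncomputable def expM (r : ℝ) : Measure ℝ :=
  volume.withDensity (fun x => ENNReal.ofReal (exponentialPDFReal r x))

lemma expM_apply (r : ℝ) {s : Set ℝ} (hs : MeasurableSet s) :
    expM r s = ∫⁻ x in s, exponentialPDF r x := by
  rw [expM, withDensity_apply _ hs]; rfl

lemma expM_Iic {r : ℝ} (hr : 0 < r) (a : ℝ) :
    expM r (Iic a) = ENNReal.ofReal (if 0 ≤ a then 1 - Real.exp (-(r * a)) else 0) := by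
  rw [expM_apply r measurableSet_Iic, lintegral_exponentialPDF_eq_antiDeriv hr a]

lemma expM_Iic_zero {r : ℝ} (hr : 0 < r) : expM r (Iic 0) = 0 := by
  rw [expM_Iic hr 0]; norm_num

lemma expM_univ {r : ℝ} (hr : 0 < r) : expM r univ = 1 := by
  have : expM r univ = ∫⁻ x, exponentialPDF r x := by
    rw [expM_apply r MeasurableSet.univ, Measure.restrict_univ]
  rw [this, lintegral_exponentialPDF_eq_one hr]

lemma expM_finite {r : ℝ} (hr : 0 < r) : IsFiniteMeasure (expM r) :=
  ⟨by rw [expM_univ hr]; exact ENNReal.one_lt_top⟩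

lemma expM_Ioi {r : ℝ} (hr : 0 < r) {a : ℝ} (ha : 0 ≤ a) :
    expM r (Ioi a) = ENNReal.ofReal (Real.exp (-(r * a))) := by
  have hc : Ioi a = (Iic a)ᶜ := by simp [compl_Iic]
  have hfin : expM r (Iic a) ≠ ⊤ := by
    rw [expM_Iic hr a]; exact ENNReal.ofReal_ne_top
  have hle : Real.exp (-(r * a)) ≤ 1 := Real.exp_le_one_iff.mpr (by nlinarith)
  rw [hc, measure_compl measurableSet_Iic hfin, expM_univ hr, expM_Iic hr a, if_pos ha]
  rw [← ENNReal.ofReal_one, ← ENNReal.ofReal_sub _ (by linarith)]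
  norm_num
section Prob
variable {Ω : Type*} [mΩ : MeasurableSpace Ω]

lemma mo_marginal (μ : Measure Ω) {l : ℝ} (hl : 0 < l) (E : Fin 7 → Ω → ℝ)
    (hmeas : ∀ i, Measurable (E i))
    (hexp : ∀ i, Measure.map (E i) μ =
      volume.withDensity (fun x => ENNReal.ofReal (exponentialPDFReal l x)))
    {a : ℝ} (ha : 0 ≤ a) (i : Fin 7) :
    μ (E i ⁻¹' Ioi a) = ENNReal.ofReal (Real.exp (-(l * a))) := by
  rw [← Measure.map_apply (hmeas i) measurableSet_Ioi, hexp i]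
  exact expM_Ioi hl ha

lemma mo_prod (μ : Measure Ω) {l : ℝ} (hl : 0 < l) (E : Fin 7 → Ω → ℝ)
    (hmeas : ∀ i, Measurable (E i))
    (hindep : iIndepFun E μ)
    (hexp : ∀ i, Measure.map (E i) μ =
      volume.withDensity (fun x => ENNReal.ofReal (exponentialPDFReal l x)))
    (R : Fin 7 → ℝ) (hR : ∀ i, 0 ≤ R i) :
    μ (⋂ i, E i ⁻¹' Ioi (R i)) = ENNReal.ofReal (Real.exp (-(l * ∑ i, R i))) := by
  rw [hindep.meas_iInter (fun i => ⟨Ioi (R i), measurableSet_Ioi, rfl⟩)]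
  calc ∏ i, μ (E i ⁻¹' Ioi (R i))
      = ∏ i, ENNReal.ofReal (Real.exp (-(l * R i))) :=
        Finset.prod_congr rfl fun i _ => mo_marginal μ hl E hmeas hexp (hR i) i
    _ = ENNReal.ofReal (∏ i, Real.exp (-(l * R i))) :=
        (ENNReal.ofReal_prod_of_nonneg fun i _ => (Real.exp_pos _).le).symm
    _ = ENNReal.ofReal (Real.exp (∑ i, -(l * R i))) := by rw [Real.exp_sum]
    _ = ENNReal.ofReal (Real.exp (-(l * ∑ i, R i))) := by
        congr 1
        rw [Finset.mul_sum, ← Finset.sum_neg_distrib]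

lemma mo_joint (μ : Measure Ω) {l : ℝ} (hl : 0 < l) (E : Fin 7 → Ω → ℝ)
    (hmeas : ∀ i, Measurable (E i))
    (hindep : iIndepFun E μ)
    (hexp : ∀ i, Measure.map (E i) μ =
      volume.withDensity (fun x => ENNReal.ofReal (exponentialPDFReal l x)))
    (X₁ X₂ X₃ : Ω → ℝ)
    (hX₁ : X₁ = fun ω => min (E 0 ω) (min (E 3 ω) (min (E 4 ω) (E 6 ω))))
    (hX₂ : X₂ = fun ω => min (E 1 ω) (min (E 3 ω) (min (E 5 ω) (E 6 ω))))
    (hX₃ : X₃ = fun ω => min (E 2 ω) (min (E 4 ω) (min (E 5 ω) (E 6 ω))))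
    {x₁ x₂ t : ℝ} (hx₁ : 0 ≤ x₁) (hx₂ : 0 ≤ x₂) (ht : 0 ≤ t) :
    μ {ω | x₁ < X₁ ω ∧ x₂ < X₂ ω ∧ t < X₃ ω} = ENNReal.ofReal (moT l x₁ x₂ t) := by
  set R : Fin 7 → ℝ :=
    ![x₁, x₂, t, max x₁ x₂, max x₁ t, max x₂ t, max x₁ (max x₂ t)] with hRdef
  have hR0 : R 0 = x₁ := rfl
  have hR1 : R 1 = x₂ := rfl
  have hR2 : R 2 = t := rfl
  have hR3 : R 3 = max x₁ x₂ := rfl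
  have hR4 : R 4 = max x₁ t := rfl
  have hR5 : R 5 = max x₂ t := rfl
  have hR6 : R 6 = max x₁ (max x₂ t) := rfl
  have hR : ∀ i, 0 ≤ R i := by
    intro i
    fin_cases i
    exacts [hx₁, hx₂, ht, le_trans hx₁ (le_max_left _ _), le_trans hx₁ (le_max_left _ _),
      le_trans hx₂ (le_max_left _ _), le_trans hx₁ (le_max_left _ _)]
  have hsetEq : {ω | x₁ < X₁ ω ∧ x₂ < X₂ ω ∧ t < X₃ ω} = ⋂ i, E i ⁻¹' Ioi (R i) := by
    ext ω
    simp only [hX₁, hX₂, hX₃, mem_setOf_eq, lt_min_iff, mem_iInter, mem_preimage, mem_Ioi]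
    constructor
    · rintro ⟨⟨h0, h3, h4, h6⟩, ⟨h1, h3', h5, h6'⟩, h2, h4', h5', h6''⟩ i
      fin_cases i
      exacts [h0, h1, h2, max_lt h3 h3', max_lt h4 h4', max_lt h5 h5',
        max_lt h6 (max_lt h6' h6'')]
    · intro h
      have h0 : x₁ < E 0 ω := h 0
      have h1 : x₂ < E 1 ω := h 1
      have h2 : t < E 2 ω := h 2
      have h3 : max x₁ x₂ < E 3 ω := h 3
      have h4 : max x₁ t < E 4 ω := h 4
      have h5 : max x₂ t < E 5 ω := h 5
      have h6 : max x₁ (max x₂ t) < E 6 ω := h 6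
      exact ⟨⟨h0, (le_max_left _ _).trans_lt h3, (le_max_left _ _).trans_lt h4,
          (le_max_left _ _).trans_lt h6⟩,
        ⟨h1, (le_max_right _ _).trans_lt h3, (le_max_left _ _).trans_lt h5,
          ((le_max_left _ _).trans (le_max_right _ _)).trans_lt h6⟩,
        h2, (le_max_right _ _).trans_lt h4, (le_max_right _ _).trans_lt h5,
        ((le_max_right _ _).trans (le_max_right _ _)).trans_lt h6⟩
  rw [hsetEq, mo_prod μ hl E hmeas hindep hexp R hR]
  congr 1
  unfold moT
  rw [Fin.sum_univ_seven, hR0, hR1, hR2, hR3, hR4, hR5, hR6, max_assoc]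

lemma mo_X3_tail (μ : Measure Ω) {l : ℝ} (hl : 0 < l) (E : Fin 7 → Ω → ℝ)
    (hmeas : ∀ i, Measurable (E i))
    (hindep : iIndepFun E μ)
    (hexp : ∀ i, Measure.map (E i) μ =
      volume.withDensity (fun x => ENNReal.ofReal (exponentialPDFReal l x)))
    (X₃ : Ω → ℝ)
    (hX₃ : X₃ = fun ω => min (E 2 ω) (min (E 4 ω) (min (E 5 ω) (E 6 ω))))
    {t : ℝ} (ht : 0 ≤ t) :
    μ {ω | t < X₃ ω} = ENNReal.ofReal (Real.exp (-(4 * l * t))) := by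
  have hsetEq : {ω | t < X₃ ω} = ⋂ i ∈ ({2, 4, 5, 6} : Finset (Fin 7)), E i ⁻¹' Ioi t := by
    ext ω
    simp only [hX₃, mem_setOf_eq, lt_min_iff, mem_iInter₂, mem_preimage, mem_Ioi,
      Finset.forall_mem_insert, Finset.mem_singleton, forall_eq]
  rw [hsetEq, hindep.meas_biInter (fun i _ => ⟨Ioi t, measurableSet_Ioi, rfl⟩)]
  have hmarg : ∀ i ∈ ({2, 4, 5, 6} : Finset (Fin 7)), μ (E i ⁻¹' Ioi t)
      = ENNReal.ofReal (Real.exp (-(l * t))) :=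
    fun i _ => mo_marginal μ hl E hmeas hexp ht i
  rw [Finset.prod_congr rfl hmarg, Finset.prod_const]
  have hcard : ({2, 4, 5, 6} : Finset (Fin 7)).card = 4 := rfl
  rw [hcard, ← ENNReal.ofReal_pow (Real.exp_pos _).le, ← Real.exp_nat_mul]
  congr 1
  push_cast
  ring

end Prob

lemma moF_nonneg (l x₁ x₂ s : ℝ) (hl : 0 < l) : 0 ≤ moF l x₁ x₂ s :=
  mul_nonneg (moG_nonneg l x₁ x₂ s hl) (by positivity)

/-- Conditional survival function of `(X₁,X₂)` given `X₃` in the exchangeable trivariate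
Marshall–Olkin model with all rates `λ`: a version of
`E[𝟙{X₁>x₁, X₂>x₂} | σ(X₃)]` is `F̄(x₁,x₂|X₃)` with
`F̄(x₁,x₂|x₃) = (1/4) e^{-λ(x₁+x₂+max(x₁,x₂))} [4·𝟙{x₁,x₂≤x₃}
+ e^{-λ(x₁+x₂+max(x₁,x₂)-3x₃)}·𝟙{x₁,x₂>x₃} + 2e^{-2λ(x₂-x₃)}·𝟙{x₁≤x₃<x₂}
+ 2e^{-2λ(x₁-x₃)}·𝟙{x₂≤x₃<x₁}]`.
Indexing: `E 0 = E₁, E 1 = E₂, E 2 = E₃, E 3 = E₁₂, E 4 = E₁₃, E 5 = E₂₃, E 6 = E₁₂₃`,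
`X₁ = min(E₁,E₁₂,E₁₃,E₁₂₃)`, `X₂ = min(E₂,E₁₂,E₂₃,E₁₂₃)`, `X₃ = min(E₃,E₁₃,E₂₃,E₁₂₃)`. -/
theorem marshall_olkin_conditional_survival
    {Ω : Type*} [mΩ : MeasurableSpace Ω] (μ : Measure Ω) [IsProbabilityMeasure μ]
    (l : ℝ) (hl : 0 < l) (E : Fin 7 → Ω → ℝ)
    (hmeas : ∀ i, Measurable (E i))
    (hindep : iIndepFun E μ)
    (hexp : ∀ i, Measure.map (E i) μ =
      volume.withDensity (fun x => ENNReal.ofReal (exponentialPDFReal l x)))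
    (X₁ X₂ X₃ : Ω → ℝ)
    (hX₁ : X₁ = fun ω => min (E 0 ω) (min (E 3 ω) (min (E 4 ω) (E 6 ω))))
    (hX₂ : X₂ = fun ω => min (E 1 ω) (min (E 3 ω) (min (E 5 ω) (E 6 ω))))
    (hX₃ : X₃ = fun ω => min (E 2 ω) (min (E 4 ω) (min (E 5 ω) (E 6 ω)))) :
    ∀ x₁ x₂ : ℝ, 0 ≤ x₁ → 0 ≤ x₂ →
      μ[Set.indicator {ω | x₁ < X₁ ω ∧ x₂ < X₂ ω} (fun _ => (1 : ℝ)) |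
          MeasurableSpace.comap X₃ (borel ℝ)] =ᵐ[μ]
        fun ω =>
          (1 / 4) * Real.exp (-(l * (x₁ + x₂ + max x₁ x₂))) *
            ((if x₁ ≤ X₃ ω ∧ x₂ ≤ X₃ ω then (4 : ℝ) else 0) +
              (if X₃ ω < x₁ ∧ X₃ ω < x₂ then
                Real.exp (-(l * (x₁ + x₂ + max x₁ x₂ - 3 * X₃ ω))) else 0) +
              (if x₁ ≤ X₃ ω ∧ X₃ ω < x₂ then 2 * Real.exp (-(2 * l * (x₂ - X₃ ω))) else 0) +
              (if x₂ ≤ X₃ ω ∧ X₃ ω < x₁ then 2 * Real.exp (-(2 * l * (x₁ - X₃ ω))) else 0)) := by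
  intro x₁ x₂ hx₁ hx₂
  have h4l : (0:ℝ) < 4 * l := by positivity
  have hX₁m : Measurable X₁ := by
    rw [hX₁]; exact (hmeas 0).min ((hmeas 3).min ((hmeas 4).min (hmeas 6)))
  have hX₂m : Measurable X₂ := by
    rw [hX₂]; exact (hmeas 1).min ((hmeas 3).min ((hmeas 5).min (hmeas 6)))
  have hX₃m : Measurable X₃ := by
    rw [hX₃]; exact (hmeas 2).min ((hmeas 4).min ((hmeas 5).min (hmeas 6)))
  have hfwd : ∀ {B : Set ℝ}, MeasurableSet[borel ℝ] B → MeasurableSet B :=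
    fun {B} hB => (BorelSpace.measurable_eq (α := ℝ)).symm ▸ hB
  have hbwd : ∀ {B : Set ℝ}, MeasurableSet B → MeasurableSet[borel ℝ] B :=
    fun {B} hB => (BorelSpace.measurable_eq (α := ℝ)) ▸ hB
  have hm : MeasurableSpace.comap X₃ (borel ℝ) ≤ mΩ := by
    rintro s ⟨B, hB, rfl⟩
    exact hX₃m (hfwd hB)
  haveI : SigmaFinite (μ.trim hm) := by infer_instance
  set A := {ω | x₁ < X₁ ω ∧ x₂ < X₂ ω} with hAdef
  have hA : MeasurableSet A :=
    (measurableSet_lt measurable_const hX₁m).inter (measurableSet_lt measurable_const hX₂m)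
  have hGmeas : Measurable fun ω => moG l x₁ x₂ (X₃ ω) := (moG_measurable l x₁ x₂).comp hX₃m
  haveI hfin4 : IsFiniteMeasure (expM (4*l)) := expM_finite h4l
  have hmap : Measure.map X₃ μ = expM (4 * l) := by
    haveI : IsProbabilityMeasure (Measure.map X₃ μ) := Measure.isProbabilityMeasure_map hX₃m.aemeasurable
    refine Measure.ext_of_Iic (Measure.map X₃ μ) (expM (4*l)) fun a => ?_
    rw [Measure.map_apply hX₃m measurableSet_Iic, expM_Iic h4l a]
    rcases le_or_gt 0 a with ha | ha
    · rw [if_pos ha]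
      have h1 : X₃ ⁻¹' Iic a = {ω | a < X₃ ω}ᶜ := by ext ω; simp
      rw [h1, measure_compl (measurableSet_lt measurable_const hX₃m) (measure_ne_top μ _),
        measure_univ, mo_X3_tail μ hl E hmeas hindep hexp X₃ hX₃ ha,
        ENNReal.ofReal_sub _ (Real.exp_pos _).le, ENNReal.ofReal_one]
    · rw [if_neg (not_le.2 ha), ENNReal.ofReal_zero]
      have hpos : μ {ω | 0 < X₃ ω} = 1 := by
        rw [mo_X3_tail μ hl E hmeas hindep hexp X₃ hX₃ le_rfl]; simp
      have hsub : X₃ ⁻¹' Iic a ⊆ {ω | 0 < X₃ ω}ᶜ := by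
        intro ω hω
        simp only [mem_preimage, mem_Iic] at hω
        simp only [mem_compl_iff, mem_setOf_eq, not_lt]
        linarith
      refine measure_mono_null hsub ?_
      rw [measure_compl (measurableSet_lt measurable_const hX₃m) (measure_ne_top μ _),
        measure_univ, hpos]
      simp
  set ρ₁ := (expM (4*l)).withDensity (fun s => ENNReal.ofReal (moG l x₁ x₂ s)) with hρ₁
  set ρ₂ := Measure.map X₃ (μ.restrict A) with hρ₂
  have hρ₂app : ∀ {B : Set ℝ}, MeasurableSet B → ρ₂ B = μ (X₃ ⁻¹' B ∩ A) := by
    intro B hB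
    rw [hρ₂, Measure.map_apply hX₃m hB, Measure.restrict_apply (hX₃m hB)]
  have hρ₁app : ∀ {B : Set ℝ}, MeasurableSet B →
      ρ₁ B = ∫⁻ s in B, ENNReal.ofReal (moG l x₁ x₂ s) ∂(expM (4*l)) :=
    fun hB => withDensity_apply _ hB
  have hIoi : ∀ a : ℝ, 0 ≤ a → ρ₁ (Ioi a) = ENNReal.ofReal (moT l x₁ x₂ a)
      ∧ ρ₂ (Ioi a) = ENNReal.ofReal (moT l x₁ x₂ a) := by
    intro a ha
    constructor
    · rw [hρ₁app measurableSet_Ioi]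
      unfold expM
      rw [setLIntegral_withDensity_eq_setLIntegral_mul volume
        ((measurable_exponentialPDFReal (4*l)).ennreal_ofReal)
        ((moG_measurable l x₁ x₂).ennreal_ofReal) measurableSet_Ioi]
      have hcong : ∀ s ∈ Ioi a,
          ((fun x => ENNReal.ofReal (exponentialPDFReal (4*l) x)) *
            (fun x => ENNReal.ofReal (moG l x₁ x₂ x))) s
          = ENNReal.ofReal (moF l x₁ x₂ s) := by
        intro s hs
        have h0s : (0:ℝ) ≤ s := le_of_lt (lt_of_le_of_lt ha hs)
        show ENNReal.ofReal (exponentialPDFReal (4*l) s) * ENNReal.ofReal (moG l x₁ x₂ s) = _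
        have hpdf : ENNReal.ofReal (exponentialPDFReal (4*l) s)
            = ENNReal.ofReal ((4*l) * Real.exp (-(4*l*s))) := exponentialPDF_of_nonneg h0s
        rw [hpdf, ← ENNReal.ofReal_mul (by positivity)]
        congr 1
        unfold moF
        ring
      rw [setLIntegral_congr_fun measurableSet_Ioi hcong,
        ← ofReal_integral_eq_lintegral_ofReal (moF_integrableOn l x₁ x₂ hl hx₁ hx₂ a)
          (ae_of_all _ fun s => moF_nonneg l x₁ x₂ s hl),
        mo_int_main hl hx₁ hx₂ a]
    · rw [hρ₂app measurableSet_Ioi]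
      have hseteq : X₃ ⁻¹' Ioi a ∩ A = {ω | x₁ < X₁ ω ∧ x₂ < X₂ ω ∧ a < X₃ ω} := by
        ext ω
        simp only [mem_inter_iff, mem_preimage, mem_Ioi, hAdef, mem_setOf_eq]
        tauto
      rw [hseteq, mo_joint μ hl E hmeas hindep hexp X₁ X₂ X₃ hX₁ hX₂ hX₃ hx₁ hx₂ ha]
  have hI0₁ : ρ₁ (Iic 0) = 0 := by
    rw [hρ₁app measurableSet_Iic]
    exact setLIntegral_measure_zero _ _ (expM_Iic_zero h4l)
  have hI0₂ : ρ₂ (Iic 0) = 0 := by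
    rw [hρ₂app measurableSet_Iic]
    refine measure_mono_null inter_subset_left ?_
    rw [← Measure.map_apply hX₃m measurableSet_Iic, hmap]
    exact expM_Iic_zero h4l
  haveI : IsFiniteMeasure ρ₁ := by
    constructor
    rw [← Measure.restrict_univ (μ := ρ₁), Measure.restrict_apply MeasurableSet.univ,
      univ_inter, hρ₁app MeasurableSet.univ]
    calc ∫⁻ s in univ, ENNReal.ofReal (moG l x₁ x₂ s) ∂(expM (4*l))
        ≤ ∫⁻ _ in univ, ENNReal.ofReal (9/4) ∂(expM (4*l)) := by
          refine lintegral_mono fun s => ENNReal.ofReal_le_ofReal (moG_le l x₁ x₂ s hl hx₁ hx₂)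
      _ < ⊤ := by
          rw [setLIntegral_const]
          exact ENNReal.mul_lt_top ENNReal.ofReal_lt_top (measure_lt_top _ _)
  haveI : IsFiniteMeasure ρ₂ := by
    constructor
    rw [← Measure.restrict_univ (μ := ρ₂), Measure.restrict_apply MeasurableSet.univ,
      univ_inter, hρ₂app MeasurableSet.univ]
    exact lt_of_le_of_lt (measure_mono (subset_univ _)) (measure_lt_top μ univ)
  have hρeq : ρ₁ = ρ₂ := by
    have huniv : ρ₁ univ = ρ₂ univ := by
      have e1 : (univ : Set ℝ) = Iic 0 ∪ Ioi 0 := Iic_union_Ioi.symm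
      rw [e1, measure_union (Iic_disjoint_Ioi le_rfl) measurableSet_Ioi,
        measure_union (Iic_disjoint_Ioi le_rfl) measurableSet_Ioi, hI0₁, hI0₂,
        (hIoi 0 le_rfl).1, (hIoi 0 le_rfl).2]
    refine Measure.ext_of_Iic ρ₁ ρ₂ fun a => ?_
    rcases le_or_gt 0 a with ha | ha
    · have hc : Iic a = (Ioi a)ᶜ := by simp
      rw [hc, measure_compl measurableSet_Ioi (measure_ne_top _ _),
        measure_compl measurableSet_Ioi (measure_ne_top _ _), huniv,
        (hIoi a ha).1, (hIoi a ha).2]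
    · have hsub : Iic a ⊆ Iic 0 := Iic_subset_Iic.2 ha.le
      rw [measure_mono_null hsub hI0₁, measure_mono_null hsub hI0₂]
  have hGae : AEStronglyMeasurable[MeasurableSpace.comap X₃ (borel ℝ)]
      (fun ω => moG l x₁ x₂ (X₃ ω)) μ := by
    have hX₃m' : Measurable[MeasurableSpace.comap X₃ (borel ℝ)] X₃ := by
      intro s hs
      exact ⟨s, hbwd hs, rfl⟩
    exact ((moG_measurable l x₁ x₂).comp hX₃m').aestronglyMeasurable
  have hGint : Integrable (fun ω => moG l x₁ x₂ (X₃ ω)) μ := by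
    refine Integrable.mono' (integrable_const (9/4 : ℝ)) hGmeas.aestronglyMeasurable
      (ae_of_all _ fun ω => ?_)
    rw [Real.norm_eq_abs, abs_of_nonneg (moG_nonneg _ _ _ _ hl)]
    exact moG_le _ _ _ _ hl hx₁ hx₂
  have hfint : Integrable (A.indicator fun _ => (1:ℝ)) μ := (integrable_const (1:ℝ)).indicator hA
  have heq : ∀ s : Set Ω, MeasurableSet[MeasurableSpace.comap X₃ (borel ℝ)] s → μ s < ⊤ →
      ∫ x in s, moG l x₁ x₂ (X₃ x) ∂μ = ∫ x in s, A.indicator (fun _ => (1:ℝ)) x ∂μ := by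
    intro s hs _
    obtain ⟨B, hB, rfl⟩ := hs
    have hB' : MeasurableSet B := hfwd hB
    have hmapint := setIntegral_map hB'
      (moG_measurable l x₁ x₂).aestronglyMeasurable hX₃m.aemeasurable
      (f := moG l x₁ x₂) (g := X₃) (μ := μ)
    have lhs : ∫ x in X₃ ⁻¹' B, moG l x₁ x₂ (X₃ x) ∂μ = (ρ₁ B).toReal := by
      rw [← hmapint, hmap,
        integral_eq_lintegral_of_nonneg_ae (ae_of_all _ fun s => moG_nonneg l x₁ x₂ s hl)
          (moG_measurable l x₁ x₂).aestronglyMeasurable, hρ₁app hB']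
    have rhs : ∫ x in X₃ ⁻¹' B, A.indicator (fun _ => (1:ℝ)) x ∂μ = (ρ₂ B).toReal := by
      rw [setIntegral_indicator hA, setIntegral_const, smul_eq_mul, mul_one, hρ₂app hB', measureReal_def]
    rw [lhs, rhs, hρeq]
  have hcond := ae_eq_condExp_of_forall_setIntegral_eq hm hfint
    (fun s _ _ => hGint.integrableOn) heq hGae
  exact hcond.symm
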